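/- arXiv:1903.01795 — 5 statements merged into one kernel-verified Lean document; each statement's English description precedes it below -/
import Mathlib

section
/- Let f(Z) = 2Z + A + (b/π)sin(2πZ) with A ∈ ℂ, b > 0, and let Γ: [0,1) → ℂ be a continuous path with Im Γ(t) → +∞ as t → 1. Then f∘Γ(t) does not converge to a finite limit in ℂ as t → 1. -/
open Filter Topology

lemma sin_re_eq (z : ℂ) : (Complex.sin z).re = Real.sin z.re * Real.cosh z.im := by
  rw [Complex.sin_eq]
  simp [← Complex.ofReal_sin, ← Complex.ofReal_cos, ← Complex.ofReal_sinh, ← Complex.ofReal_cosh]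

lemma sin_im_eq (z : ℂ) : (Complex.sin z).im = Real.cos z.re * Real.sinh z.im := by
  rw [Complex.sin_eq]
  simp [← Complex.ofReal_sin, ← Complex.ofReal_cos, ← Complex.ofReal_sinh, ← Complex.ofReal_cosh]

lemma aux_tendsto (C : ℝ) (hC : 0 ≤ C) :
    Tendsto (fun v => (C + 2*v) / Real.sinh (2*Real.pi*v)) atTop (𝓝 0) := by
  have hR : Tendsto (fun v => (4*C)*Real.exp (-v) + 8*(v*Real.exp (-v))) atTop (𝓝 0) := by
    have h1 := Real.tendsto_exp_neg_atTop_nhds_zero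
    have h2 := Real.tendsto_pow_mul_exp_neg_atTop_nhds_zero 1
    simp only [pow_one] at h2
    simpa using (h1.const_mul (4*C)).add (h2.const_mul 8)
  apply squeeze_zero' (g := fun v => (4*C)*Real.exp (-v) + 8*(v*Real.exp (-v))) ?_ ?_ hR
  · filter_upwards [eventually_ge_atTop 1] with v hv
    have : 0 < Real.sinh (2*Real.pi*v) := by
      rw [Real.sinh_pos_iff]; positivity
    positivity
  · filter_upwards [eventually_ge_atTop 1] with v hv
    have hpi := Real.pi_gt_three
    have hv0 : (0:ℝ) < v := by linarith
    have hs1 : Real.sinh v ≤ Real.sinh (2*Real.pi*v) := by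
      rw [Real.sinh_le_sinh]; nlinarith
    have hexp2 : (2:ℝ) ≤ Real.exp v := by
      have := Real.add_one_le_exp v; linarith
    have hexpneg : Real.exp (-v) ≤ 1 := Real.exp_le_one_iff.mpr (by linarith)
    have hs2 : Real.exp v / 4 ≤ Real.sinh v := by
      rw [Real.sinh_eq]; linarith
    have hs3 : Real.exp v / 4 ≤ Real.sinh (2*Real.pi*v) := le_trans hs2 hs1
    have hnum : (0:ℝ) ≤ C + 2*v := by linarith
    have h4 : (0:ℝ) < Real.exp v / 4 := by positivity
    calc (C + 2*v) / Real.sinh (2*Real.pi*v) ≤ (C + 2*v) / (Real.exp v / 4) :=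
          div_le_div_of_nonneg_left hnum h4 hs3 |>.trans_eq rfl
      _ = (4*C)*Real.exp (-v) + 8*(v*Real.exp (-v)) := by
          rw [Real.exp_neg]
          field_simp
          ring

/-- Let `f(Z) = 2Z + A + (b/π) sin(2πZ)` with `A ∈ ℂ`, `b > 0`, and let
`Γ : [0,1) → ℂ` be a continuous path with `Im Γ(t) → +∞` as `t → 1`. Then
`f ∘ Γ` has no finite limit as `t → 1`. -/
theorem no_finite_asymptotic_value (A : ℂ) (b : ℝ) (hb : 0 < b)
    (Γ : ℝ → ℂ) (hΓ : ContinuousOn Γ (Set.Ico 0 1))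
    (hIm : Tendsto (fun t => (Γ t).im) (𝓝[Set.Iio 1] 1) atTop) :
    ¬ ∃ L : ℂ, Tendsto
      (fun t => 2 * Γ t + A + ((b : ℂ) / Real.pi) * Complex.sin (2 * Real.pi * Γ t))
      (𝓝[Set.Iio 1] 1) (𝓝 L) := by
  rintro ⟨L, hf⟩
  have hπ : (0:ℝ) < Real.pi := Real.pi_pos
  set f : ℝ → ℂ := fun t => 2 * Γ t + A + ((b : ℂ) / Real.pi) * Complex.sin (2 * Real.pi * Γ t)
    with hfdef
  -- real/imaginary part identities
  have hbpi : ((b:ℂ) / (Real.pi:ℂ)) = (((b / Real.pi : ℝ)) : ℂ) := by push_cast; ring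
  have harg : ∀ t, ((2:ℂ) * (Real.pi:ℂ) * Γ t) = (((2*Real.pi : ℝ)) : ℂ) * Γ t := by
    intro t; push_cast; ring
  have hre : ∀ t, (f t).re = 2*(Γ t).re + A.re
      + (b/Real.pi) * (Real.sin (2*Real.pi*(Γ t).re) * Real.cosh (2*Real.pi*(Γ t).im)) := by
    intro t
    show (2 * Γ t + A + ((b : ℂ) / Real.pi) * Complex.sin (2 * Real.pi * Γ t)).re = _
    rw [harg, hbpi]
    simp [Complex.add_re, Complex.mul_re, Complex.re_ofReal_mul, Complex.im_ofReal_mul,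
      sin_re_eq, sin_im_eq]
  have him : ∀ t, (f t).im = 2*(Γ t).im + A.im
      + (b/Real.pi) * (Real.cos (2*Real.pi*(Γ t).re) * Real.sinh (2*Real.pi*(Γ t).im)) := by
    intro t
    show (2 * Γ t + A + ((b : ℂ) / Real.pi) * Complex.sin (2 * Real.pi * Γ t)).im = _
    rw [harg, hbpi]
    simp [Complex.add_im, Complex.mul_im, Complex.re_ofReal_mul, Complex.im_ofReal_mul,
      sin_re_eq, sin_im_eq]
  have hfre : Tendsto (fun t => (f t).re) (𝓝[Set.Iio 1] 1) (𝓝 L.re) :=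
    (Complex.continuous_re.tendsto L).comp hf
  have hfim : Tendsto (fun t => (f t).im) (𝓝[Set.Iio 1] 1) (𝓝 L.im) :=
    (Complex.continuous_im.tendsto L).comp hf
  -- Step: |cos(2π x t)| → 0
  set C : ℝ := |L.im| + 1 + |A.im| with hCdef
  have hC : 0 ≤ C := by positivity
  have habs : Tendsto (fun t => |Real.cos (2*Real.pi*(Γ t).re)|) (𝓝[Set.Iio 1] 1) (𝓝 0) := by
    have hgT : Tendsto (fun t => (Real.pi/b) *
        ((C + 2*(Γ t).im) / Real.sinh (2*Real.pi*(Γ t).im))) (𝓝[Set.Iio 1] 1) (𝓝 0) := by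
      have := ((aux_tendsto C hC).const_mul (Real.pi/b)).comp hIm
      rw [mul_zero] at this; exact this
    apply squeeze_zero' ?_ ?_ hgT
    · exact Eventually.of_forall (fun t => abs_nonneg _)
    · have h1 : ∀ᶠ t in 𝓝[Set.Iio 1] 1, |(f t).im - L.im| ≤ 1 := by
        have := Metric.tendsto_nhds.mp hfim 1 one_pos
        filter_upwards [this] with t ht
        rw [Real.dist_eq] at ht; linarith
      filter_upwards [h1, hIm.eventually_ge_atTop 1] with t ht1 ht2
      have hy : (0:ℝ) < (Γ t).im := lt_of_lt_of_le one_pos ht2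
      have hs : 0 < Real.sinh (2*Real.pi*(Γ t).im) := by
        rw [Real.sinh_pos_iff]; positivity
      have e1 : Real.cos (2*Real.pi*(Γ t).re) * Real.sinh (2*Real.pi*(Γ t).im)
          = (Real.pi/b) * ((f t).im - A.im - 2*(Γ t).im) := by
        rw [him t]; field_simp; ring
      have e2 : |(f t).im - A.im - 2*(Γ t).im| ≤ C + 2*(Γ t).im := by
        have hL1 := le_abs_self L.im
        have hL2 := neg_abs_le L.im
        have hA1 := le_abs_self A.im
        have hA2 := neg_abs_le A.im
        have h3 := abs_le.mp ht1
        rw [abs_le]; refine ⟨?_, ?_⟩ <;> simp only [hCdef] <;> linarith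
      calc |Real.cos (2*Real.pi*(Γ t).re)|
          = |Real.cos (2*Real.pi*(Γ t).re) * Real.sinh (2*Real.pi*(Γ t).im)|
              / Real.sinh (2*Real.pi*(Γ t).im) := by
            rw [abs_mul, abs_of_pos hs, mul_div_assoc, div_self hs.ne', mul_one]
        _ ≤ ((Real.pi/b) * (C + 2*(Γ t).im)) / Real.sinh (2*Real.pi*(Γ t).im) := by
            gcongr
            rw [e1, abs_mul, abs_of_pos (by positivity : (0:ℝ) < Real.pi/b)]
            gcongr
        _ = (Real.pi/b) * ((C + 2*(Γ t).im) / Real.sinh (2*Real.pi*(Γ t).im)) := by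
            rw [mul_div_assoc]
  have hcos_half : ∀ᶠ t in 𝓝[Set.Iio 1] 1, |Real.cos (2*Real.pi*(Γ t).re)| < 1/2 := by
    have := Metric.tendsto_nhds.mp habs (1/2) (by norm_num)
    filter_upwards [this] with t ht
    rwa [Real.dist_eq, sub_zero, abs_abs] at ht
  have hsin_half : ∀ᶠ t in 𝓝[Set.Iio 1] 1, 1/2 ≤ |Real.sin (2*Real.pi*(Γ t).re)| := by
    filter_upwards [hcos_half] with t ht
    nlinarith [Real.sin_sq_add_cos_sq (2*Real.pi*(Γ t).re),
      sq_abs (Real.sin (2*Real.pi*(Γ t).re)), sq_abs (Real.cos (2*Real.pi*(Γ t).re)),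
      abs_nonneg (Real.sin (2*Real.pi*(Γ t).re)), abs_nonneg (Real.cos (2*Real.pi*(Γ t).re))]
  -- Step: |x t| → ∞
  have hcoshT : Tendsto (fun t => Real.cosh (2*Real.pi*(Γ t).im)) (𝓝[Set.Iio 1] 1) atTop := by
    have hle : ∀ u : ℝ, u ≤ Real.cosh u := by
      intro u
      rcases le_total 0 u with h | h
      · exact le_trans (Real.self_le_sinh_iff.mpr h) (Real.sinh_lt_cosh u).le
      · exact le_trans (le_trans h zero_le_one) (Real.one_le_cosh u)
    exact tendsto_atTop_mono (fun t => hle _) (hIm.const_mul_atTop (by positivity))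
  set C2 : ℝ := 1 + |L.re| + |A.re| with hC2def
  have hxT2 : Tendsto (fun t => 2*|(Γ t).re|) (𝓝[Set.Iio 1] 1) atTop := by
    apply tendsto_atTop_mono' _ ?_
        (tendsto_atTop_add_const_right _ (-C2) (hcoshT.const_mul_atTop
          (by positivity : (0:ℝ) < (b/Real.pi)*(1/2))))
    have h1 : ∀ᶠ t in 𝓝[Set.Iio 1] 1, |(f t).re - L.re| ≤ 1 := by
      have := Metric.tendsto_nhds.mp hfre 1 one_pos
      filter_upwards [this] with t ht
      rw [Real.dist_eq] at ht; linarith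
    filter_upwards [h1, hsin_half] with t ht1 ht2
    have hcosh := Real.cosh_pos (2*Real.pi*(Γ t).im)
    have e1 : (b/Real.pi) * (Real.sin (2*Real.pi*(Γ t).re) * Real.cosh (2*Real.pi*(Γ t).im))
        = (f t).re - A.re - 2*(Γ t).re := by rw [hre t]; ring
    have a1 : (b/Real.pi)*(1/2)*Real.cosh (2*Real.pi*(Γ t).im)
        ≤ |(b/Real.pi) * (Real.sin (2*Real.pi*(Γ t).re) * Real.cosh (2*Real.pi*(Γ t).im))| := by
      rw [abs_mul, abs_mul, abs_of_pos (by positivity : (0:ℝ) < b/Real.pi), abs_of_pos hcosh,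
        ← mul_assoc]
      gcongr
    rw [e1] at a1
    have a2 : |(f t).re - A.re - 2*(Γ t).re| ≤ 1 + |L.re| + |A.re| + 2*|(Γ t).re| := by
      have hL1 := le_abs_self L.re
      have hL2 := neg_abs_le L.re
      have hA1 := le_abs_self A.re
      have hA2 := neg_abs_le A.re
      have hx1 := le_abs_self (Γ t).re
      have hx2 := neg_abs_le (Γ t).re
      have h3 := abs_le.mp ht1
      rw [abs_le]; constructor <;> linarith
    simp only [hC2def]
    linarith
  have hxT : Tendsto (fun t => |(Γ t).re|) (𝓝[Set.Iio 1] 1) atTop := by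
    have := hxT2.atTop_div_const (two_pos)
    simpa [mul_div_assoc, mul_comm] using this
  -- Final contradiction via the intermediate value theorem
  obtain ⟨u, hu, huE⟩ := mem_nhdsLT_iff_exists_Ioo_subset.mp hcos_half
  set u' : ℝ := max u 0 with hu'def
  have hu'1 : u' < 1 := max_lt hu (by norm_num)
  set t1 : ℝ := (u' + 1)/2 with ht1def
  have ht1 : u' < t1 ∧ t1 < 1 := by constructor <;> simp only [ht1def] <;> linarith
  obtain ⟨v, hv, hvE⟩ := mem_nhdsLT_iff_exists_Ioo_subset.mp
    (hxT.eventually_ge_atTop (|(Γ t1).re| + 1))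
  set w : ℝ := max v t1 with hwdef
  have hw1 : w < 1 := max_lt hv ht1.2
  set t2 : ℝ := (w + 1)/2 with ht2def
  have ht2 : w < t2 ∧ t2 < 1 := by constructor <;> simp only [ht2def] <;> linarith
  have ht12 : t1 < t2 := lt_of_le_of_lt (le_max_right v t1) ht2.1
  have hx2 : |(Γ t1).re| + 1 ≤ |(Γ t2).re| :=
    hvE ⟨lt_of_le_of_lt (le_max_left v t1) ht2.1, ht2.2⟩
  have hdiff : 1 ≤ |(Γ t2).re - (Γ t1).re| := by
    have := abs_abs_sub_abs_le_abs_sub ((Γ t2).re) ((Γ t1).re)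
    have h2 := le_abs_self (|(Γ t2).re| - |(Γ t1).re|)
    linarith
  have hsub : Set.Icc t1 t2 ⊆ Set.Ico 0 1 := by
    intro t ht
    exact ⟨le_trans (le_trans (le_max_right u 0) ht1.1.le) ht.1, lt_of_le_of_lt ht.2 ht2.2⟩
  have hconton : ContinuousOn (fun t => (Γ t).re) (Set.uIcc t1 t2) := by
    rw [Set.uIcc_of_le ht12.le]
    exact Complex.continuous_re.comp_continuousOn (hΓ.mono hsub)
  set n : ℤ := ⌈min ((Γ t1).re) ((Γ t2).re)⌉ with hndef
  have hmM : min ((Γ t1).re) ((Γ t2).re) + 1 ≤ max ((Γ t1).re) ((Γ t2).re) := by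
    have h1 := max_sub_min_eq_abs ((Γ t1).re) ((Γ t2).re)
    linarith
  have hceil1 : min ((Γ t1).re) ((Γ t2).re) ≤ (n:ℝ) := Int.le_ceil _
  have hceil2 : (n:ℝ) ≤ min ((Γ t1).re) ((Γ t2).re) + 1 := (Int.ceil_lt_add_one _).le
  have hmem : (n:ℝ) ∈ Set.uIcc ((Γ t1).re) ((Γ t2).re) := by
    rcases le_total ((Γ t1).re) ((Γ t2).re) with h | h
    · rw [min_eq_left h] at hceil1 hceil2
      rw [max_eq_right h, min_eq_left h] at hmM
      exact Set.mem_uIcc.mpr (Or.inl ⟨hceil1, by linarith⟩)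
    · rw [min_eq_right h] at hceil1 hceil2
      rw [max_eq_left h, min_eq_right h] at hmM
      exact Set.mem_uIcc.mpr (Or.inr ⟨hceil1, by linarith⟩)
  obtain ⟨t', ht'mem, ht'⟩ := intermediate_value_uIcc hconton hmem
  rw [Set.uIcc_of_le ht12.le] at ht'mem
  have ht'Ioo : t' ∈ Set.Ioo u 1 :=
    ⟨lt_of_le_of_lt (le_max_left u 0) (lt_of_lt_of_le ht1.1 ht'mem.1),
      lt_of_le_of_lt ht'mem.2 ht2.2⟩
  have hE := huE ht'Ioo
  simp only [Set.mem_setOf_eq] at hE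
  have hx' : (Γ t').re = (n:ℝ) := ht'
  rw [hx', mul_comm (2*Real.pi) ((n:ℝ)), Real.cos_int_mul_two_pi] at hE
  norm_num at hE
end

section
/- Let f: U → V be a degree-d covering map of punctured disks U = Û∖{x}, V = V̂∖{y} ramifying at x (so in suitable coordinates f(z) = z^d), and let q be a quadratic differential meromorphic at x. Then the pushforward f_*q (sum of pullbacks over inverse branches) extends meromorphically to y and satisfies 2 + ord_y(f_*q) ≥ (2 + ord_x q)/d. -/
open Filter Topology Finset

/-- Let `f(z) = z^d` be the model of a degree-`d` covering of punctured disks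
ramifying at `0`, let `q = φ(dz)²` be meromorphic at `0` of order `n`, and let
`f_*q = Q(dw)²` be its pushforward, characterized by
`f*(f_*q) = Σ_h h*q` over the deck transformations `h(z) = e^{2πij/d}z`.
If `f_*q` is meromorphic of order `m` at `0`, then `2 + m ≥ (2 + n)/d`. -/
theorem pushforward_order_estimate
    (d : ℕ) (hd : 1 ≤ d)
    (φ : ℂ → ℂ) (n : ℤ)
    (v : ℂ → ℂ) (hv : AnalyticAt ℂ v 0) (hv0 : v 0 ≠ 0)
    (hφ : ∀ᶠ z in 𝓝[≠] (0 : ℂ), φ z = z ^ n * v z)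
    (Q : ℂ → ℂ) (m : ℤ)
    (u : ℂ → ℂ) (hu : AnalyticAt ℂ u 0) (hu0 : u 0 ≠ 0)
    (hQ : ∀ᶠ w in 𝓝[≠] (0 : ℂ), Q w = w ^ m * u w)
    (hpush : ∀ᶠ z in 𝓝[≠] (0 : ℂ),
      Q (z ^ d) * ((d : ℂ) * z ^ (d - 1)) ^ 2 =
        ∑ j ∈ Finset.range d,
          φ (Complex.exp (2 * Real.pi * Complex.I * j / d) * z) *
            Complex.exp (2 * Real.pi * Complex.I * j / d) ^ 2) :
    (2 + n : ℤ) ≤ d * (2 + m) := by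
  set ζ : ℕ → ℂ := fun j => Complex.exp (2 * Real.pi * Complex.I * j / d) with hζ
  have hζ0 : ∀ j, ζ j ≠ 0 := fun j => Complex.exp_ne_zero _
  set k : ℤ := d * m + 2 * ((d : ℤ) - 1) with hk
  set W : ℂ → ℂ := fun z => ∑ j ∈ Finset.range d, ζ j ^ n * v (ζ j * z) * ζ j ^ 2 with hW
  -- tendsto facts
  have hpd : Tendsto (fun z : ℂ => z ^ d) (𝓝[≠] 0) (𝓝[≠] 0) := by
    apply tendsto_nhdsWithin_of_tendsto_nhds_of_eventually_within
    · have := (continuous_pow d).tendsto (0 : ℂ)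
      simpa [zero_pow (by omega : d ≠ 0)] using this.mono_left nhdsWithin_le_nhds
    · filter_upwards [self_mem_nhdsWithin] with z hz
      exact pow_ne_zero d hz
  have hmul : ∀ j, Tendsto (fun z : ℂ => ζ j * z) (𝓝[≠] 0) (𝓝[≠] 0) := by
    intro j
    apply tendsto_nhdsWithin_of_tendsto_nhds_of_eventually_within
    · have := (continuous_const.mul continuous_id :
        Continuous fun z : ℂ => ζ j * z).tendsto (0 : ℂ)
      have h : Tendsto (fun z : ℂ => ζ j * z) (𝓝 0) (𝓝 (ζ j * 0)) := this
      rw [mul_zero] at h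
      exact h.mono_left nhdsWithin_le_nhds
    · filter_upwards [self_mem_nhdsWithin] with z hz
      exact mul_ne_zero (hζ0 j) hz
  -- main eventual equality
  have key : ∀ᶠ z in 𝓝[≠] (0 : ℂ),
      z ^ k * (u (z ^ d) * (d : ℂ) ^ 2) = z ^ n * W z := by
    have hφall : ∀ᶠ z in 𝓝[≠] (0 : ℂ), ∀ j ∈ Finset.range d,
        φ (ζ j * z) = (ζ j * z) ^ n * v (ζ j * z) := by
      rw [Filter.eventually_all_finset]
      intro j _
      exact (hmul j).eventually hφ
    filter_upwards [hpush, hpd.eventually hQ, hφall, self_mem_nhdsWithin]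
      with z h1 h2 h3 hz
    have hzz : z ≠ 0 := hz
    calc z ^ k * (u (z ^ d) * (d : ℂ) ^ 2)
        = Q (z ^ d) * ((d : ℂ) * z ^ (d - 1)) ^ 2 := by
          rw [h2]
          have e1 : ((z : ℂ) ^ d) ^ m = z ^ ((d : ℤ) * m) := by
            rw [← zpow_natCast z d, ← zpow_mul]
          have e2 : (z : ℂ) ^ (d - 1) = z ^ ((d : ℤ) - 1) := by
            rw [← zpow_natCast z (d - 1)]
            congr 1
            omega
          rw [e1, e2, mul_pow, ← zpow_natCast (z ^ ((d:ℤ) - 1)) 2, ← zpow_mul]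
          rw [hk, zpow_add₀ hzz]
          push_cast
          ring
      _ = ∑ j ∈ Finset.range d, φ (ζ j * z) * ζ j ^ 2 := h1
      _ = z ^ n * W z := by
          rw [hW, Finset.mul_sum]
          apply Finset.sum_congr rfl
          intro j hj
          rw [h3 j hj, mul_zpow]
          ring
  -- reduce to n ≤ k
  have hnk : n ≤ k := by
    by_contra hlt
    push_neg at hlt
    set p : ℕ := (n - k).toNat with hp
    have hp1 : 1 ≤ p := by omega
    have hep : ∀ᶠ z in 𝓝[≠] (0 : ℂ), u (z ^ d) * (d : ℂ) ^ 2 = z ^ p * W z := by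
      filter_upwards [key, self_mem_nhdsWithin] with z h1 hz
      have hzz : (z : ℂ) ≠ 0 := hz
      have : z ^ k * (u (z ^ d) * (d : ℂ) ^ 2) = z ^ k * (z ^ p * W z) := by
        rw [h1, ← zpow_natCast z p, hp, Int.toNat_of_nonneg (by omega),
          ← mul_assoc, ← zpow_add₀ hzz]
        congr 2
        omega
      exact mul_left_cancel₀ (zpow_ne_zero k hzz) this
    have t1 : Tendsto (fun z : ℂ => u (z ^ d) * (d : ℂ) ^ 2) (𝓝[≠] 0)
        (𝓝 (u 0 * (d : ℂ) ^ 2)) := by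
      have hcu : ContinuousAt (fun z : ℂ => u (z ^ d)) 0 := by
        have : ContinuousAt u ((0 : ℂ) ^ d) := by
          rw [zero_pow (by omega : d ≠ 0)]
          exact hu.continuousAt
        exact ContinuousAt.comp (f := fun z : ℂ => z ^ d) this
          ((continuous_pow d).continuousAt)
      have h2 : ContinuousAt (fun z : ℂ => u (z ^ d) * (d : ℂ) ^ 2) 0 :=
        hcu.mul continuousAt_const
      have h3 := h2.tendsto
      simp only [zero_pow (by omega : d ≠ 0)] at h3
      exact h3.mono_left nhdsWithin_le_nhds
    have t2 : Tendsto (fun z : ℂ => z ^ p * W z) (𝓝[≠] 0) (𝓝 0) := by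
      have hWc : ContinuousAt W 0 := by
        apply AnalyticAt.continuousAt (𝕜 := ℂ)
        apply Finset.analyticAt_fun_sum
        intro j _
        apply AnalyticAt.mul
        apply AnalyticAt.mul analyticAt_const
        · have h1 : AnalyticAt ℂ (fun z : ℂ => ζ j * z) 0 :=
            (analyticAt_const.mul analyticAt_id)
          have h2 : AnalyticAt ℂ v (ζ j * 0) := by simpa using hv
          exact h2.comp h1
        · exact analyticAt_const
      have hz : Tendsto (fun z : ℂ => z ^ p) (𝓝 (0:ℂ)) (𝓝 0) := by
        have := (continuous_pow p).tendsto (0 : ℂ)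
        simpa [zero_pow (by omega : p ≠ 0)] using this
      have := hz.mul hWc.tendsto
      simp only [zero_mul] at this
      exact this.mono_left nhdsWithin_le_nhds
    have t1' : Tendsto (fun z : ℂ => u (z ^ d) * (d : ℂ) ^ 2) (𝓝[≠] 0) (𝓝 0) :=
      t2.congr' (hep.mono fun z h => h.symm)
    have := tendsto_nhds_unique t1 t1'
    have hd0 : ((d : ℂ)) ≠ 0 := Nat.cast_ne_zero.mpr (by omega)
    exact (mul_ne_zero hu0 (pow_ne_zero 2 hd0)) this
  have hdm : (d : ℤ) * (2 + m) = 2 * d + d * m := by ring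
  omega
end

section
/- Let f: U → V be a covering map of punctured disks U = Û∖{x}, V = V̂∖{y} ramifying at x, let q be a quadratic differential meromorphic on Û, and let ϑ be a meromorphic vector field on V. Then residue(f_*q ⊗ ϑ, y) = residue(q ⊗ f*ϑ, x). -/
open Filter Topology Finset

section Helpers

open Complex Metric intervalIntegral Function

private lemma mero_diffOn {f : ℂ → ℂ} (hf : MeromorphicAt f 0) :
    ∃ ε > (0:ℝ), ∀ z : ℂ, z ≠ 0 → ‖z‖ < ε → DifferentiableAt ℂ f z := by
  have h := hf.eventually_analyticAt
  rw [eventually_nhdsWithin_iff, Metric.eventually_nhds_iff] at h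
  obtain ⟨ε, hε, h⟩ := h
  exact ⟨ε, hε, fun z hz hlt =>
    (h (by simpa [Complex.dist_eq] using hlt) hz).differentiableAt⟩

private lemma rot_integral (g : ℂ → ℂ) (s : ℝ) (a : ℂ) (ha : ‖a‖ = 1) :
    (∮ z in C(0, s), a * g (a * z)) = ∮ z in C(0, s), g z := by
  have haa : a = Complex.exp (a.arg * I) := by
    conv_lhs => rw [← Complex.norm_mul_exp_arg_mul_I a]
    rw [ha]; simp
  set t := a.arg
  have hcm : ∀ θ : ℝ, a * circleMap 0 s θ = circleMap 0 s (θ + t) := by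
    intro θ
    simp only [circleMap_zero]
    rw [haa]
    push_cast
    rw [mul_comm (Complex.exp _), mul_assoc, ← Complex.exp_add]
    ring_nf
  set K : ℝ → ℂ := fun u => circleMap 0 s u * I * g (circleMap 0 s u) with hK
  have hKper : Periodic K (2 * Real.pi) :=
    (periodic_circleMap 0 s).comp fun z => z * I * g z
  calc (∮ z in C(0, s), a * g (a * z))
      = ∫ θ in (0:ℝ)..2 * Real.pi, K (θ + t) := by
        simp only [circleIntegral, deriv_circleMap, smul_eq_mul, hK]
        refine intervalIntegral.integral_congr fun θ _ => ?_
        rw [← hcm θ]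
        ring
    _ = ∫ θ in (0+t:ℝ)..2 * Real.pi + t, K θ := intervalIntegral.integral_comp_add_right K t
    _ = ∫ θ in (0:ℝ)..2 * Real.pi, K θ := by
        rw [zero_add, add_comm (2 * Real.pi) t]
        simpa using hKper.intervalIntegral_add_eq t 0
    _ = ∮ z in C(0, s), g z := by
        simp only [circleIntegral, deriv_circleMap, smul_eq_mul, hK]

private lemma pow_integral (f : ℂ → ℂ) (d : ℕ) (hd : 1 ≤ d) (s : ℝ) (hs : 0 < s)
    (hcont : ContinuousOn f (Metric.sphere (0:ℂ) (s ^ d))) :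
    (∮ z in C(0, s), ((d:ℂ) * z ^ (d-1)) * f (z ^ d)) = d * ∮ w in C(0, s ^ d), f w := by
  have hsd : (0:ℝ) < s ^ d := pow_pos hs d
  have hcm : ∀ (k : ℕ) (θ : ℝ), (circleMap 0 s θ) ^ k = circleMap 0 (s ^ k) (k * θ) := by
    intro k θ
    simp only [circleMap_zero, mul_pow, ← Complex.exp_nat_mul]
    push_cast
    ring_nf
  set K : ℝ → ℂ := fun u => circleMap 0 (s ^ d) u * I * f (circleMap 0 (s ^ d) u) with hK
  have hKper : Periodic K (2 * Real.pi) :=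
    (periodic_circleMap 0 (s ^ d)).comp fun z => z * I * f z
  have hKcont : Continuous K := by
    apply ((continuous_circleMap 0 (s ^ d)).mul continuous_const).mul
    exact hcont.comp_continuous (continuous_circleMap 0 (s ^ d))
      (fun θ => circleMap_mem_sphere _ hsd.le θ)
  have hd0 : (d:ℝ) ≠ 0 := by positivity
  calc (∮ z in C(0, s), ((d:ℂ) * z ^ (d-1)) * f (z ^ d))
      = ∫ θ in (0:ℝ)..2 * Real.pi, (d:ℂ) * K ((d:ℝ) * θ) := by
        simp only [circleIntegral, deriv_circleMap, smul_eq_mul, hK]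
        refine intervalIntegral.integral_congr fun θ _ => ?_
        rw [← hcm d θ]
        have hzz : circleMap 0 s θ * (circleMap 0 s θ) ^ (d-1) = (circleMap 0 s θ) ^ d := by
          rw [← pow_succ', Nat.sub_add_cancel hd]
        rw [← hzz]
        ring
    _ = (d:ℂ) * ∫ θ in (0:ℝ)..2 * Real.pi, K ((d:ℝ) * θ) := intervalIntegral.integral_const_mul _ _
    _ = (d:ℂ) * ((d:ℝ)⁻¹ • ∫ θ in ((d:ℝ)*0)..(d:ℝ) * (2 * Real.pi), K θ) := by
        rw [intervalIntegral.integral_comp_mul_left K hd0]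
    _ = (d:ℂ) * ((d:ℝ)⁻¹ • ∫ θ in (0:ℝ)..(0 + (d:ℤ) • (2 * Real.pi)), K θ) := by
        norm_num [zsmul_eq_mul]
    _ = (d:ℂ) * ((d:ℝ)⁻¹ • ((d:ℤ) • ∫ θ in (0:ℝ)..(0 + 2 * Real.pi), K θ)) := by
        rw [hKper.intervalIntegral_add_zsmul_eq (d:ℤ) 0
          (fun t₁ t₂ => hKcont.intervalIntegrable t₁ t₂)]
    _ = (d:ℂ) * ∫ θ in (0:ℝ)..2 * Real.pi, K θ := by
        rw [Complex.real_smul]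
        push_cast
        have hdc : (d:ℂ) ≠ 0 := Nat.cast_ne_zero.mpr (by omega)
        field_simp
        simp [zsmul_eq_mul]
    _ = d * ∮ w in C(0, s ^ d), f w := by
        simp only [circleIntegral, deriv_circleMap, smul_eq_mul, hK]

private lemma radius_indep (f : ℂ → ℂ) {ε : ℝ}
    (hdiff : ∀ z : ℂ, z ≠ 0 → ‖z‖ < ε → DifferentiableAt ℂ f z)
    {a b : ℝ} (ha : 0 < a) (hab : a ≤ b) (hb : b < ε) :
    (∮ z in C(0, b), f z) = ∮ z in C(0, a), f z := by
  have key : ∀ z : ℂ, z ∈ closedBall (0:ℂ) b \ ball 0 a → DifferentiableAt ℂ f z := by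
    intro z hz
    obtain ⟨h1, h2⟩ := hz
    rw [mem_closedBall, Complex.dist_eq, sub_zero] at h1
    rw [mem_ball, Complex.dist_eq, sub_zero, not_lt] at h2
    refine hdiff z (fun h => by simp [h] at h2; linarith) (lt_of_le_of_lt h1 hb)
  exact circleIntegral_eq_of_differentiable_on_annulus_off_countable ha hab Set.countable_empty
    (fun z hz => (key z hz).continuousAt.continuousWithinAt)
    (fun z hz => key z ⟨ball_subset_closedBall hz.1.1,
      fun hm => hz.1.2 (ball_subset_closedBall hm)⟩)

private lemma circleIntegral_finset_sum {ι : Type*} (t : Finset ι) (g : ι → ℂ → ℂ) (c : ℂ) (R : ℝ)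
    (h : ∀ j ∈ t, CircleIntegrable (g j) c R) :
    (∮ z in C(c, R), ∑ j ∈ t, g j z) = ∑ j ∈ t, ∮ z in C(c, R), g j z := by
  simp only [circleIntegral, smul_sum]
  rw [intervalIntegral.integral_finset_sum (fun j hj => (h j hj).out)]

end Helpers

/-- Let `f(z) = z^d` be the model of a covering of punctured disks ramifying at
`0`, `q = φ(dz)²` meromorphic at `0`, `ϑ = ψ d/dw` a meromorphic vector field
downstairs, and `f_*q = Q(dw)²` the pushforward, characterized by
`f*(f_*q) = Σ_h h*q` over deck transformations `h(z) = e^{2πij/d}z`. Then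
`residue(f_*q ⊗ ϑ, 0) = residue(q ⊗ f*ϑ, 0)`, where the residues are computed
by contour integrals: `∮ Q(w)ψ(w) dw = ∮ φ(z)·ψ(z^d)/(d z^{d−1}) dz` over all
small circles. -/
theorem residue_pushforward_pairing
    (d : ℕ) (hd : 1 ≤ d)
    (φ ψ Q : ℂ → ℂ)
    (hφ : MeromorphicAt φ 0) (hψ : MeromorphicAt ψ 0) (hQ : MeromorphicAt Q 0)
    (hpush : ∀ᶠ z in 𝓝[≠] (0 : ℂ),
      Q (z ^ d) * ((d : ℂ) * z ^ (d - 1)) ^ 2 =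
        ∑ j ∈ Finset.range d,
          φ (Complex.exp (2 * Real.pi * Complex.I * j / d) * z) *
            Complex.exp (2 * Real.pi * Complex.I * j / d) ^ 2) :
    ∃ r₀ > (0 : ℝ), ∀ r : ℝ, 0 < r → r < r₀ →
      (∮ w in C(0, r), Q w * ψ w) =
        ∮ z in C(0, r), φ z * ψ (z ^ d) / ((d : ℂ) * z ^ (d - 1)) := by
  classical
  obtain ⟨ε₁, hε₁, hφd⟩ := mero_diffOn hφ
  obtain ⟨ε₂, hε₂, hψd⟩ := mero_diffOn hψ
  obtain ⟨ε₃, hε₃, hQd⟩ := mero_diffOn hQ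
  rw [eventually_nhdsWithin_iff, Metric.eventually_nhds_iff] at hpush
  obtain ⟨ε₄, hε₄, hpush⟩ := hpush
  have hdc : (d:ℂ) ≠ 0 := Nat.cast_ne_zero.mpr (by omega)
  set ω : ℕ → ℂ := fun j => Complex.exp (2 * Real.pi * Complex.I * j / d) with hω
  have hωabs : ∀ j, ‖ω j‖ = 1 := by
    intro j
    have : (2 * Real.pi * Complex.I * j / d) = ((2 * Real.pi * j / d : ℝ) : ℂ) * Complex.I := by
      push_cast; ring
    rw [hω]; simp only; rw [this, Complex.norm_exp_ofReal_mul_I]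
  have hωd : ∀ j, (ω j) ^ d = 1 := by
    intro j
    rw [hω]; simp only
    rw [← Complex.exp_nat_mul]
    have : (d:ℂ) * (2 * Real.pi * Complex.I * j / d) = j * (2 * Real.pi * Complex.I) := by
      field_simp
    rw [this, Complex.exp_nat_mul_two_pi_mul_I]
  have hωne : ∀ j, ω j ≠ 0 := fun j => Complex.exp_ne_zero _
  set F : ℂ → ℂ := fun w => Q w * ψ w with hF
  set G : ℂ → ℂ := fun z => φ z * ψ (z ^ d) / ((d:ℂ) * z ^ (d-1)) with hG
  set ε : ℝ := min (min ε₁ ε₂) (min (min ε₃ ε₄) 1) with hε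
  have hεpos : 0 < ε := by
    simp only [hε, lt_min_iff]
    exact ⟨⟨hε₁, hε₂⟩, ⟨hε₃, hε₄⟩, one_pos⟩
  have hεle1 : ε ≤ ε₁ := le_trans (min_le_left _ _) (min_le_left _ _)
  have hεle2 : ε ≤ ε₂ := le_trans (min_le_left _ _) (min_le_right _ _)
  have hεle3 : ε ≤ ε₃ := le_trans (min_le_right _ _) (le_trans (min_le_left _ _) (min_le_left _ _))
  have hεle4 : ε ≤ ε₄ := le_trans (min_le_right _ _) (le_trans (min_le_left _ _) (min_le_right _ _))
  have hεle5 : ε ≤ 1 := le_trans (min_le_right _ _) (min_le_right _ _)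
  have habs_pow : ∀ z : ℂ, ‖z‖ < ε → ‖z ^ d‖ < ε := by
    intro z hlt
    rw [norm_pow]
    calc ‖z‖ ^ d ≤ ‖z‖ :=
          pow_le_of_le_one (norm_nonneg z) (hlt.le.trans hεle5) (by omega)
      _ < ε := hlt
  have hFd : ∀ z : ℂ, z ≠ 0 → ‖z‖ < ε → DifferentiableAt ℂ F z := fun z hz hlt =>
    (hQd z hz (lt_of_lt_of_le hlt hεle3)).mul (hψd z hz (lt_of_lt_of_le hlt hεle2))
  have hGd : ∀ z : ℂ, z ≠ 0 → ‖z‖ < ε → DifferentiableAt ℂ G z := by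
    intro z hz hlt
    have h1 := hφd z hz (lt_of_lt_of_le hlt hεle1)
    have h2 : DifferentiableAt ℂ (fun z : ℂ => ψ (z ^ d)) z :=
      (hψd (z ^ d) (pow_ne_zero d hz)
        (lt_of_lt_of_le (habs_pow z hlt) hεle2)).comp z (differentiableAt_pow d)
    have h3 : ((d:ℂ) * z ^ (d-1)) ≠ 0 := mul_ne_zero hdc (pow_ne_zero _ hz)
    exact (h1.mul h2).div ((differentiableAt_const _).mul (differentiableAt_pow _)) h3
  refine ⟨ε, hεpos, fun r hr hrε => ?_⟩
  set s : ℝ := min r 1 / 2 with hs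
  have hspos : 0 < s := by
    rw [hs]
    have : (0:ℝ) < min r 1 := lt_min hr one_pos
    linarith
  have hs_le_r : s ≤ r := by
    rw [hs]
    have : min r 1 ≤ r := min_le_left _ _
    linarith
  have hs_lt_ε : s < ε := lt_of_le_of_lt hs_le_r hrε
  have hs_le_1 : s ≤ 1 := by
    rw [hs]
    have : min r 1 ≤ 1 := min_le_right _ _
    linarith
  have hsd_le : s ^ d ≤ s := pow_le_of_le_one hspos.le hs_le_1 (by omega)
  have hsd_pos : (0:ℝ) < s ^ d := pow_pos hspos d
  -- main identity at radius s
  have key : (∮ w in C(0, s ^ d), F w) = ∮ z in C(0, s), G z := by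
    have hFc : ContinuousOn F (Metric.sphere (0:ℂ) (s ^ d)) := by
      intro z hz
      rw [Metric.mem_sphere, Complex.dist_eq, sub_zero] at hz
      have hzne : z ≠ 0 := fun h => by rw [h] at hz; simp at hz; linarith
      exact (hFd z hzne (by rw [hz]; exact lt_of_le_of_lt hsd_le hs_lt_ε)).continuousAt.continuousWithinAt
    have hstep1 := pow_integral F d hd s hspos hFc
    have hsphere_facts : ∀ z : ℂ, z ∈ Metric.sphere (0:ℂ) s → z ≠ 0 ∧ ‖z‖ < ε := by
      intro z hz
      rw [Metric.mem_sphere, Complex.dist_eq, sub_zero] at hz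
      exact ⟨fun h => by rw [h] at hz; simp at hz; linarith, by rw [hz]; exact hs_lt_ε⟩
    have hcongr : Set.EqOn (fun z => ((d:ℂ) * z ^ (d-1)) * F (z ^ d))
        (fun z => ∑ j ∈ Finset.range d, ω j * G (ω j * z)) (Metric.sphere (0:ℂ) s) := by
      intro z hz
      obtain ⟨hzne, hzlt⟩ := hsphere_facts z hz
      have hE := hpush (y := z) (by rw [Complex.dist_eq, sub_zero]; exact lt_of_lt_of_le hzlt hεle4)
        (Set.mem_compl_singleton_iff.mpr hzne)
      have hden : ((d:ℂ) * z ^ (d-1)) ≠ 0 := mul_ne_zero hdc (pow_ne_zero _ hzne)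
      have hterm : ∀ j ∈ Finset.range d,
          ω j * G (ω j * z) = φ (ω j * z) * (ω j) ^ 2 * (ψ (z ^ d) / ((d:ℂ) * z ^ (d-1))) := by
        intro j _
        have hpowid : (ω j) ^ (d-1) * ω j = 1 := by
          rw [← pow_succ, Nat.sub_add_cancel hd, hωd j]
        have hmp : (ω j * z) ^ d = z ^ d := by rw [mul_pow, hωd j, one_mul]
        have hden1 : ((d:ℂ) * ((ω j) ^ (d-1) * z ^ (d-1))) ≠ 0 :=
          mul_ne_zero hdc (mul_ne_zero (pow_ne_zero _ (hωne j)) (pow_ne_zero _ hzne))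
        rw [hG]
        simp only
        rw [hmp, mul_pow, ← mul_div_assoc, ← mul_div_assoc]
        rw [div_eq_div_iff hden1 hden]
        linear_combination (-(φ (ω j * z) * ψ (z ^ d) * (d:ℂ) * z ^ (d-1) * ω j)) * hpowid
      simp only
      rw [Finset.sum_congr rfl hterm, ← Finset.sum_mul, ← hE, hF]
      simp only
      field_simp
    have hInt : ∀ j ∈ Finset.range d, CircleIntegrable (fun z => ω j * G (ω j * z)) 0 s := by
      intro j _
      refine ContinuousOn.circleIntegrable hspos.le ?_
      intro z hz
      obtain ⟨hzne, hzlt⟩ := hsphere_facts z hz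
      have h1 : ‖ω j * z‖ < ε := by rw [norm_mul, hωabs j, one_mul]; exact hzlt
      have h2 : ω j * z ≠ 0 := mul_ne_zero (hωne j) hzne
      exact (continuousAt_const.mul (((hGd _ h2 h1).continuousAt).comp
        (continuousAt_const.mul continuousAt_id))).continuousWithinAt
    calc (∮ w in C(0, s ^ d), F w)
        = (d:ℂ)⁻¹ * ((d:ℂ) * ∮ w in C(0, s ^ d), F w) := by field_simp
      _ = (d:ℂ)⁻¹ * ∮ z in C(0, s), ((d:ℂ) * z ^ (d-1)) * F (z ^ d) := by rw [hstep1]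
      _ = (d:ℂ)⁻¹ * ∮ z in C(0, s), ∑ j ∈ Finset.range d, ω j * G (ω j * z) := by
          rw [circleIntegral.integral_congr hspos.le hcongr]
      _ = (d:ℂ)⁻¹ * ∑ j ∈ Finset.range d, ∮ z in C(0, s), ω j * G (ω j * z) := by
          rw [circleIntegral_finset_sum _ _ _ _ hInt]
      _ = (d:ℂ)⁻¹ * ∑ j ∈ Finset.range d, ∮ z in C(0, s), G z := by
          congr 1
          exact Finset.sum_congr rfl fun j _ => rot_integral G s (ω j) (hωabs j)
      _ = ∮ z in C(0, s), G z := by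
          rw [Finset.sum_const, Finset.card_range, nsmul_eq_mul]
          field_simp
  calc (∮ w in C(0, r), F w)
      = ∮ w in C(0, s ^ d), F w := radius_indep F hFd hsd_pos (hsd_le.trans hs_le_r) hrε
    _ = ∮ z in C(0, s), G z := key
    _ = ∮ z in C(0, r), G z := (radius_indep G hGd hspos hs_le_r hrε).symm
end

section
/- Let f be a holomorphic self-map of a Riemann surface with a fixed point x, let ζ be a local coordinate at x with ζ∘f = ζ + O(ζ³), let q be a quadratic differential meromorphic near x with q − f*q holomorphic near x, and let τ be a vector field holomorphic near x with f a local isomorphism near x. Then residue(q ⊗ f*τ, x) = residue(q ⊗ τ, x). -/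
open Filter Topology Set Metric

lemma my_circleIntegral_add {f g : ℂ → ℂ} {c : ℂ} {R : ℝ} (hf : CircleIntegrable f c R)
    (hg : CircleIntegrable g c R) :
    (∮ z in C(c, R), (f z + g z)) = (∮ z in C(c, R), f z) + ∮ z in C(c, R), g z := by
  simp only [circleIntegral, smul_add, intervalIntegral.integral_add hf.out hg.out]

lemma my_circleIntegral_deriv_eq_zero {F F' : ℂ → ℂ} {r : ℝ} (hr : 0 < r)
    (hd : ∀ z ∈ Metric.sphere (0:ℂ) r, HasDerivAt F (F' z) z)
    (hi : CircleIntegrable F' 0 r) :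
    (∮ z in C(0, r), F' z) = 0 := by
  have key : ∀ θ ∈ uIcc (0:ℝ) (2 * Real.pi), HasDerivAt (fun t => F (circleMap 0 r t))
      (deriv (circleMap 0 r) θ • F' (circleMap 0 r θ)) θ := by
    intro θ _
    have h1 := hasDerivAt_circleMap 0 r θ
    have h2 := hd _ (circleMap_mem_sphere (0:ℂ) hr.le θ)
    have h3 := HasDerivAt.scomp (𝕜 := ℝ) θ h2 h1
    simpa [Function.comp_def, deriv_circleMap, smul_eq_mul, mul_comm] using h3
  rw [circleIntegral, intervalIntegral.integral_eq_sub_of_hasDerivAt key hi.out]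
  have : circleMap 0 r (2 * Real.pi) = circleMap 0 r 0 := by
    rw [show (2 * Real.pi) = 0 + 2 * Real.pi by ring, periodic_circleMap]
  rw [this, sub_self]

lemma my_cauchy_zero {F : ℂ → ℂ} {δ r : ℝ} (hr : 0 < r) (hrδ : r < δ)
    (hd : ∀ z ∈ Metric.ball (0:ℂ) δ, DifferentiableAt ℂ F z) :
    (∮ z in C(0, r), F z) = 0 := by
  have hsub : Metric.closedBall (0:ℂ) r ⊆ Metric.ball (0:ℂ) δ := closedBall_subset_ball hrδ
  refine Complex.circleIntegral_eq_zero_of_differentiable_on_off_countable hr.le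
    Set.countable_empty
    (fun z hz => (hd z (hsub hz)).continuousAt.continuousWithinAt) (fun z hz => ?_)
  exact hd z (hsub (ball_subset_closedBall hz.1))

/-- Let `f` fix `0` with `ζ∘f = ζ + O(ζ³)` in a local coordinate, let
`q = φ(dζ)²` be meromorphic at `0` with `q − f*q` holomorphic at `0`, and let
`τ = ψ d/dζ` be a holomorphic vector field. Then
`residue(q ⊗ f*τ, 0) = residue(q ⊗ τ, 0)`, where `q ⊗ f*τ` has coefficient
`φ(z)·ψ(f(z))/f'(z)` and `q ⊗ τ` has coefficient `φ(z)·ψ(z)`, the residues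
being computed as contour integrals over small circles. -/
theorem residue_invariance_at_parabolic (f : ℂ → ℂ) (hf : AnalyticAt ℂ f 0)
    (u : ℂ → ℂ) (hu : AnalyticAt ℂ u 0)
    (hexp : ∀ᶠ ζ in 𝓝 (0 : ℂ), f ζ = ζ + ζ ^ 3 * u ζ)
    (φ : ℂ → ℂ) (hφ : MeromorphicAt φ 0)
    (h : ℂ → ℂ) (hh : AnalyticAt ℂ h 0)
    (hinv : ∀ᶠ z in 𝓝[≠] (0 : ℂ), φ z - φ (f z) * (deriv f z) ^ 2 = h z)
    (ψ : ℂ → ℂ) (hψ : AnalyticAt ℂ ψ 0) :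
    ∃ r₀ > (0 : ℝ), ∀ r : ℝ, 0 < r → r < r₀ →
      (∮ z in C(0, r), φ z * ψ (f z) / deriv f z) =
        ∮ z in C(0, r), φ z * ψ z := by
  classical
  obtain ⟨n, hn⟩ := hφ
  set g : ℂ → ℂ := fun z => z * ((z - 0) ^ n • φ z) with hg_def
  have hg : AnalyticAt ℂ g 0 := analyticAt_id.mul hn
  have hg_eq : ∀ w : ℂ, g w = w ^ (n + 1) * φ w := by
    intro w
    simp only [hg_def, smul_eq_mul, sub_zero, pow_succ]
    ring
  set G : ℂ → ℂ := fun w => g w * ψ w with hG_def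
  have hGan : AnalyticAt ℂ G 0 := hg.mul hψ
  set D : ℕ → ℂ → ℂ := fun k => (Function.swap dslope 0)^[k] G with hD_def
  have hDsucc : ∀ k, D (k + 1) = dslope (D k) 0 := by
    intro k
    simp only [hD_def, Function.iterate_succ_apply', Function.swap]
  have hDan : ∀ k, AnalyticAt ℂ (D k) 0 := by
    intro k
    induction k with
    | zero => exact hGan
    | succ k ih =>
      obtain ⟨p, hp⟩ := ih
      rw [hDsucc]
      exact ⟨_, hp.has_fpower_series_dslope_fslope⟩
  set c : ℕ → ℂ := fun k => D k 0 with hc_def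
  have htay : ∀ j, ∀ w : ℂ, G w = (∑ k ∈ Finset.range j, c k * w ^ k) + w ^ j * D j w := by
    intro j
    induction j with
    | zero => intro w; simp [hD_def]
    | succ j ih =>
      intro w
      have hstep : D j w = c j + w * D (j + 1) w := by
        have h1 := sub_smul_dslope (D j) 0 w
        simp only [sub_zero, smul_eq_mul] at h1
        rw [hDsucc j, hc_def]
        linear_combination -h1
      rw [Finset.sum_range_succ]
      calc G w = (∑ k ∈ Finset.range j, c k * w ^ k) + w ^ j * D j w := ih w
        _ = _ := by rw [hstep]; ring
  -- local model for f
  set v : ℂ → ℂ := fun z => 1 + z ^ 2 * u z with hv_def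
  have hvan : AnalyticAt ℂ v 0 := analyticAt_const.add ((analyticAt_id.pow 2).mul hu)
  set fe : ℂ → ℂ := fun z => z * v z with hfe_def
  have hfev : ∀ᶠ z in 𝓝 (0:ℂ), f z = fe z := by
    filter_upwards [hexp] with z hz
    rw [hz]
    simp only [hfe_def, hv_def]
    ring
  have hvan' : ∀ᶠ z in 𝓝 (0:ℂ), AnalyticAt ℂ v z := hvan.eventually_analyticAt
  have hdvan : ∀ᶠ z in 𝓝 (0:ℂ), AnalyticAt ℂ (deriv v) z := by
    obtain ⟨s, hs, hsub⟩ := hvan'.exists_mem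
    obtain ⟨t, hts, hto, h0t⟩ := _root_.mem_nhds_iff.mp hs
    have hA : AnalyticOnNhd ℂ v t := fun x hx => hsub x (hts hx)
    exact eventually_of_mem (hto.mem_nhds h0t) (fun x hx => hA.deriv x hx)
  set e' : ℂ → ℂ := fun z => v z + z * deriv v z with he'_def
  have hdvan0 : AnalyticAt ℂ (deriv v) 0 := hdvan.self_of_nhds
  have he'an : AnalyticAt ℂ e' 0 := hvan.add (analyticAt_id.mul hdvan0)
  have hv0 : v 0 = 1 := by simp [hv_def]
  have he'0 : e' 0 = 1 := by simp [he'_def, hv0]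
  have hdf : deriv f =ᶠ[𝓝 (0:ℂ)] deriv fe := Filter.EventuallyEq.deriv hfev
  have hfeD' : ∀ z : ℂ, AnalyticAt ℂ v z → AnalyticAt ℂ (deriv v) z →
      HasDerivAt fe (e' z) z := by
    intro z hz _
    have h1 := (hasDerivAt_id z).mul hz.differentiableAt.hasDerivAt
    simpa [hfe_def, he'_def, Pi.mul_def, id_eq] using h1
  have hdfe : ∀ᶠ z in 𝓝 (0:ℂ), deriv fe z = e' z := by
    filter_upwards [hvan', hdvan] with z h1 h2
    exact (hfeD' z h1 h2).deriv
  have hderivf : ∀ᶠ z in 𝓝 (0:ℂ), deriv f z = e' z := by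
    filter_upwards [hdf, hdfe] with z h1 h2
    rw [h1, h2]
  have hvne : ∀ᶠ z in 𝓝 (0:ℂ), v z ≠ 0 :=
    hvan.continuousAt.eventually_ne (by rw [hv0]; exact one_ne_zero)
  have he'ne : ∀ᶠ z in 𝓝 (0:ℂ), e' z ≠ 0 :=
    he'an.continuousAt.eventually_ne (by rw [he'0]; exact one_ne_zero)
  have hinv' : ∀ᶠ z in 𝓝 (0:ℂ), z ≠ 0 → φ z - φ (f z) * (deriv f z) ^ 2 = h z := by
    have h1 := eventually_nhdsWithin_iff.mp hinv
    filter_upwards [h1] with z hz hz0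
    exact hz (by simpa using hz0)
  have hbig : ∀ᶠ z in 𝓝 (0:ℂ),
      (AnalyticAt ℂ ψ z ∧ AnalyticAt ℂ h z ∧ AnalyticAt ℂ v z ∧ AnalyticAt ℂ (deriv v) z ∧
        AnalyticAt ℂ (D (n+1)) z) ∧
      (f z = fe z ∧ deriv f z = e' z ∧ v z ≠ 0 ∧ e' z ≠ 0 ∧
        (z ≠ 0 → φ z - φ (f z) * (deriv f z) ^ 2 = h z)) := by
    filter_upwards [hψ.eventually_analyticAt, hh.eventually_analyticAt, hvan', hdvan,
      (hDan (n+1)).eventually_analyticAt, hfev, hderivf, hvne, he'ne, hinv'] with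
      z a1 a2 a3 a4 a5 b1 b2 b3 b4 b5
    exact ⟨⟨a1, a2, a3, a4, a5⟩, b1, b2, b3, b4, b5⟩
  obtain ⟨ε, hε, hP⟩ := Metric.eventually_nhds_iff_ball.mp hbig
  -- shrink so that fe maps into the ε-ball
  have hfe0 : fe 0 = 0 := by simp [hfe_def]
  have hfecont : ContinuousAt fe 0 := continuousAt_id.mul hvan.continuousAt
  have hmap : ∀ᶠ z in 𝓝 (0:ℂ), fe z ∈ Metric.ball (0:ℂ) ε := by
    have hmem : Metric.ball (0:ℂ) ε ∈ 𝓝 (fe 0) := by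
      rw [hfe0]; exact Metric.ball_mem_nhds _ hε
    exact hfecont.eventually_mem hmem
  obtain ⟨δ', hδ', hδmap⟩ := Metric.eventually_nhds_iff_ball.mp hmap
  set δ := min δ' ε with hδ_def
  have hδpos : 0 < δ := lt_min hδ' hε
  -- principal-part antiderivative
  set dH : ℂ → ℂ := fun w => ∑ k ∈ Finset.range n, c k * w ^ ((k:ℤ) - n - 1) with hdH_def
  set Hh : ℂ → ℂ := fun w => ∑ k ∈ Finset.range n,
    c k / (((k:ℤ) - n : ℤ) : ℂ) * w ^ ((k:ℤ) - n) with hH_def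
  have hHderiv : ∀ w : ℂ, w ≠ 0 → HasDerivAt Hh (dH w) w := by
    intro w hw
    simp only [hH_def, hdH_def]
    apply HasDerivAt.fun_sum
    intro k hk
    have hkn : ((k:ℤ) - n) ≠ 0 := by
      have := Finset.mem_range.mp hk; omega
    have hcast : ((((k:ℤ) - n : ℤ)) : ℂ) ≠ 0 := Int.cast_ne_zero.mpr hkn
    have h1 := (hasDerivAt_zpow ((k:ℤ) - n) w (Or.inl hw)).const_mul
      (c k / (((k:ℤ) - n : ℤ) : ℂ))
    have hcast' : (k:ℂ) - (n:ℂ) ≠ 0 := by push_cast at hcast; exact hcast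
    refine h1.congr_deriv ?_
    push_cast
    rw [← mul_assoc, div_mul_cancel₀ _ hcast']
  have hdHdiff : ∀ w : ℂ, w ≠ 0 → DifferentiableAt ℂ dH w := by
    intro w hw
    simp only [hdH_def]
    apply DifferentiableAt.fun_sum
    intro k _
    exact (differentiableAt_zpow.mpr (Or.inl hw)).const_mul _
  -- splitting of φ * ψ
  have hsplit : ∀ w : ℂ, w ≠ 0 → φ w * ψ w = dH w + c n * w⁻¹ + D (n+1) w := by
    intro w hw
    have hpow : (w : ℂ) ^ (n+1) ≠ 0 := pow_ne_zero _ hw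
    have hGw : w ^ (n+1) * (φ w * ψ w)
        = (∑ k ∈ Finset.range (n+1), c k * w ^ k) + w ^ (n+1) * D (n+1) w := by
      calc w ^ (n+1) * (φ w * ψ w) = g w * ψ w := by rw [hg_eq]; ring
        _ = G w := rfl
        _ = _ := htay (n+1) w
    have hdiv : φ w * ψ w
        = (∑ k ∈ Finset.range (n+1), c k * w ^ k) / w ^ (n+1) + D (n+1) w := by
      field_simp
      linear_combination hGw
    rw [hdiv, Finset.sum_range_succ, add_div]
    have h1 : (c n * w ^ n) / w ^ (n+1) = c n * w⁻¹ := by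
      rw [pow_succ]
      field_simp
    have h2 : (∑ k ∈ Finset.range n, c k * w ^ k) / w ^ (n+1) = dH w := by
      rw [Finset.sum_div, hdH_def]
      apply Finset.sum_congr rfl
      intro k _
      rw [mul_div_assoc]
      congr 1
      rw [← zpow_natCast w k, ← zpow_natCast w (n+1), ← zpow_sub₀ hw]
      congr 1
      push_cast
      ring
    rw [h1, h2]
  refine ⟨δ, hδpos, fun r hr hrδ => ?_⟩
  have hrδ' : r < δ' := lt_of_lt_of_le hrδ (min_le_left _ _)
  have hrε : r < ε := lt_of_lt_of_le hrδ (min_le_right _ _)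
  -- facts on points of the ball of radius δ
  have hball : ∀ z : ℂ, z ∈ Metric.ball (0:ℂ) δ →
      z ∈ Metric.ball (0:ℂ) ε ∧ fe z ∈ Metric.ball (0:ℂ) ε := by
    intro z hz
    rw [Metric.mem_ball] at hz
    constructor
    · exact Metric.mem_ball.mpr (lt_of_lt_of_le hz (min_le_right _ _))
    · exact hδmap z (Metric.mem_ball.mpr (lt_of_lt_of_le hz (min_le_left _ _)))
  have hsph : ∀ z : ℂ, z ∈ Metric.sphere (0:ℂ) r → z ∈ Metric.ball (0:ℂ) δ ∧ z ≠ 0 := by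
    intro z hz
    rw [Metric.mem_sphere] at hz
    constructor
    · exact Metric.mem_ball.mpr (by rw [hz]; exact hrδ)
    · rintro rfl
      simp only [dist_self] at hz
      linarith
  set A : ℂ → ℂ := fun z => h z * ψ (fe z) / e' z + c n * (deriv v z / v z)
    + D (n+1) (fe z) * e' z with hA_def
  -- pointwise identity for the left-hand integrand on the sphere
  have hLHS : ∀ z ∈ Metric.sphere (0:ℂ) r,
      φ z * ψ (f z) / deriv f z = A z + (dH (fe z) * e' z + c n * z⁻¹) := by
    intro z hz
    obtain ⟨hzδ, hz0⟩ := hsph z hz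
    obtain ⟨hzε, hfez⟩ := hball z hzδ
    obtain ⟨⟨a1, a2, a3, a4, a5⟩, b1, b2, b3, b4, b5⟩ := hP z hzε
    have hw : fe z ≠ 0 := mul_ne_zero hz0 b3
    have hφz : φ z = h z + φ (fe z) * e' z ^ 2 := by
      have h5 := b5 hz0
      rw [b1, b2] at h5
      linear_combination h5
    have hsp := hsplit (fe z) hw
    have hkey : e' z * (fe z)⁻¹ = z⁻¹ + deriv v z / v z := by
      show (v z + z * deriv v z) * (z * v z)⁻¹ = _
      field_simp
    rw [b1, b2, hφz]
    have expand : (h z + φ (fe z) * e' z ^ 2) * ψ (fe z) / e' z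
        = h z * ψ (fe z) / e' z + (φ (fe z) * ψ (fe z)) * e' z := by
      field_simp
    rw [expand, hsp, hA_def]
    calc h z * ψ (fe z) / e' z + (dH (fe z) + c n * (fe z)⁻¹ + D (n+1) (fe z)) * e' z
        = h z * ψ (fe z) / e' z + c n * (e' z * (fe z)⁻¹) + D (n+1) (fe z) * e' z
          + dH (fe z) * e' z := by ring
      _ = _ := by rw [hkey]; ring
  -- pointwise identity for the right-hand integrand
  have hRHS : ∀ z ∈ Metric.sphere (0:ℂ) r,
      φ z * ψ z = D (n+1) z + (dH z + c n * z⁻¹) := by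
    intro z hz
    rw [hsplit z (hsph z hz).2]
    ring
  -- differentiability of A on the δ-ball
  have hAdiff : ∀ z ∈ Metric.ball (0:ℂ) δ, DifferentiableAt ℂ A z := by
    intro z hz
    obtain ⟨hzε, hfez⟩ := hball z hz
    obtain ⟨⟨a1, a2, a3, a4, a5⟩, b1, b2, b3, b4, b5⟩ := hP z hzε
    obtain ⟨⟨aψ, -, -, -, aD⟩, -⟩ := hP (fe z) hfez
    have hdv := a3.differentiableAt
    have hddv := a4.differentiableAt
    have hdfe : DifferentiableAt ℂ fe z := differentiableAt_id.mul hdv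
    have hde' : DifferentiableAt ℂ e' z := hdv.add (differentiableAt_id.mul hddv)
    have h1 : DifferentiableAt ℂ (fun z => ψ (fe z)) z := aψ.differentiableAt.comp z hdfe
    have h2 : DifferentiableAt ℂ (fun z => D (n+1) (fe z)) z := aD.differentiableAt.comp z hdfe
    exact (((a2.differentiableAt.mul h1).div hde' b4).add
      ((differentiableAt_const _).mul (hddv.div hdv b3))).add (h2.mul hde')
  have hIA : (∮ z in C(0, r), A z) = 0 := my_cauchy_zero hr hrδ hAdiff
  have hID : (∮ z in C(0, r), D (n+1) z) = 0 := by
    apply my_cauchy_zero hr hrε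
    intro z hz
    exact ((hP z hz).1.2.2.2.2).differentiableAt
  -- continuity on the sphere / integrability
  have hContA : ContinuousOn A (Metric.sphere (0:ℂ) r) := fun z hz =>
    (hAdiff z (hsph z hz).1).continuousAt.continuousWithinAt
  have hContdHfe : ContinuousOn (fun z => dH (fe z) * e' z) (Metric.sphere (0:ℂ) r) := by
    intro z hz
    obtain ⟨hzδ, hz0⟩ := hsph z hz
    obtain ⟨hzε, hfez⟩ := hball z hzδ
    obtain ⟨⟨a1, a2, a3, a4, a5⟩, b1, b2, b3, b4, b5⟩ := hP z hzε
    have hdv := a3.differentiableAt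
    have hddv := a4.differentiableAt
    have hdfe : DifferentiableAt ℂ fe z := differentiableAt_id.mul hdv
    have hde' : DifferentiableAt ℂ e' z := hdv.add (differentiableAt_id.mul hddv)
    have hw : fe z ≠ 0 := mul_ne_zero hz0 b3
    exact (((hdHdiff (fe z) hw).continuousAt.comp hdfe.continuousAt).mul
      hde'.continuousAt).continuousWithinAt
  have hContdH : ContinuousOn dH (Metric.sphere (0:ℂ) r) := fun z hz =>
    (hdHdiff z (hsph z hz).2).continuousAt.continuousWithinAt
  have hContinv : ContinuousOn (fun z : ℂ => c n * z⁻¹) (Metric.sphere (0:ℂ) r) := fun z hz =>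
    (continuousAt_const.mul (continuousAt_inv₀ (hsph z hz).2)).continuousWithinAt
  have iA : CircleIntegrable A 0 r := ContinuousOn.circleIntegrable hr.le hContA
  have idHfe : CircleIntegrable (fun z => dH (fe z) * e' z) 0 r :=
    ContinuousOn.circleIntegrable hr.le hContdHfe
  have iinv : CircleIntegrable (fun z : ℂ => c n * z⁻¹) 0 r :=
    ContinuousOn.circleIntegrable hr.le hContinv
  have idH : CircleIntegrable dH 0 r := ContinuousOn.circleIntegrable hr.le hContdH
  have iD : CircleIntegrable (D (n+1)) 0 r := ContinuousOn.circleIntegrable hr.le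
    (fun z hz => (((hP z (hball z (hsph z hz).1).1).1.2.2.2.2).differentiableAt).continuousAt.continuousWithinAt)
  -- the exact pieces
  have hIdHfe : (∮ z in C(0, r), dH (fe z) * e' z) = 0 := by
    refine my_circleIntegral_deriv_eq_zero (F := Hh ∘ fe) hr (fun z hz => ?_) idHfe
    obtain ⟨hzδ, hz0⟩ := hsph z hz
    obtain ⟨hzε, hfez⟩ := hball z hzδ
    obtain ⟨⟨a1, a2, a3, a4, a5⟩, b1, b2, b3, b4, b5⟩ := hP z hzε
    have hw : fe z ≠ 0 := mul_ne_zero hz0 b3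
    exact HasDerivAt.comp z (hHderiv (fe z) hw) (hfeD' z a3 a4)
  have hIdH : (∮ z in C(0, r), dH z) = 0 := by
    exact my_circleIntegral_deriv_eq_zero (F := Hh) hr (fun z hz => hHderiv z (hsph z hz).2) idH
  have hIinv : (∮ z in C(0, r), c n * z⁻¹) = c n * (2 * Real.pi * Complex.I) := by
    rw [circleIntegral.integral_const_mul]
    have h0 : (0:ℂ) ∈ Metric.ball (0:ℂ) r := Metric.mem_ball_self hr
    have hiv := circleIntegral.integral_sub_inv_of_mem_ball h0
    simp only [sub_zero] at hiv
    rw [hiv]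
  calc (∮ z in C(0, r), φ z * ψ (f z) / deriv f z)
      = ∮ z in C(0, r), (A z + (dH (fe z) * e' z + c n * z⁻¹)) :=
        circleIntegral.integral_congr hr.le (fun z hz => hLHS z hz)
    _ = (∮ z in C(0, r), A z) + ∮ z in C(0, r), (dH (fe z) * e' z + c n * z⁻¹) :=
        my_circleIntegral_add iA (idHfe.add iinv)
    _ = (∮ z in C(0, r), A z) + ((∮ z in C(0, r), dH (fe z) * e' z)
          + ∮ z in C(0, r), c n * z⁻¹) := by rw [my_circleIntegral_add idHfe iinv]
    _ = c n * (2 * Real.pi * Complex.I) := by rw [hIA, hIdHfe, hIinv]; ring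
    _ = (∮ z in C(0, r), D (n+1) z) + ((∮ z in C(0, r), dH z)
          + ∮ z in C(0, r), c n * z⁻¹) := by rw [hID, hIdH, hIinv]; ring
    _ = (∮ z in C(0, r), D (n+1) z) + ∮ z in C(0, r), (dH z + c n * z⁻¹) := by
        rw [my_circleIntegral_add idH iinv]
    _ = ∮ z in C(0, r), (D (n+1) z + (dH z + c n * z⁻¹)) :=
        (my_circleIntegral_add iD (idH.add iinv)).symm
    _ = ∮ z in C(0, r), φ z * ψ z :=
        circleIntegral.integral_congr hr.le (fun z hz => (hRHS z hz).symm)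
end

section
/- Let f: X → Y be holomorphic with two distinct simple critical points c⁺, c⁻ whose critical values f(c⁺), f(c⁻) are distinct and not critical points. Set Z := {c⁺, c⁻, f(c⁺), f(c⁻)}. Suppose ξ₁, ξ₂ are vector fields holomorphic near Z such that both ϑ + ξ₁ − f*ξ₁ and ϑ + ξ₂ − f*ξ₂ are holomorphic and vanish at c⁺ and c⁻, for some fixed vector field ϑ meromorphic near {c⁺,c⁻} with at worst simple poles there. Then ξ₁ = ξ₂ on Z. -/
open Filter Topology

lemma analyticAt_deriv_of_analyticAt {f : ℂ → ℂ} {c : ℂ} (hf : AnalyticAt ℂ f c) :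
    AnalyticAt ℂ (deriv f) c := by
  obtain ⟨s, hs, hfs⟩ := hf.exists_mem_nhds_analyticOnNhd
  exact hfs.deriv c (mem_of_mem_nhds hs)

lemma guiding_key {f g : ℂ → ℂ} {c : ℂ}
    (hf : AnalyticAt ℂ f c) (hg : AnalyticAt ℂ g c) (hgf : AnalyticAt ℂ g (f c))
    (hc1 : deriv f c = 0) (hc2 : deriv (deriv f) c ≠ 0)
    (h : Tendsto (fun z => g z - g (f z) / deriv f z) (𝓝[≠] c) (𝓝 0)) :
    g c = 0 ∧ g (f c) = 0 := by
  have hf' : AnalyticAt ℂ (deriv f) c := analyticAt_deriv_of_analyticAt hf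
  -- eventually deriv f z ≠ 0 on punctured nbhd
  have hne_d : ∀ᶠ z in 𝓝[≠] c, deriv f z ≠ 0 := by
    rcases hf'.eventually_eq_zero_or_eventually_ne_zero with h0 | h1
    · exfalso
      apply hc2
      have : deriv f =ᶠ[𝓝 c] (fun _ => (0 : ℂ)) := h0
      rw [this.deriv_eq]
      simp
    · exact h1
  -- eventually f z ≠ f c on punctured nbhd
  have hne_f : ∀ᶠ z in 𝓝[≠] c, f z ≠ f c := by
    have hsub : AnalyticAt ℂ (fun z => f z - f c) c := hf.sub analyticAt_const
    rcases hsub.eventually_eq_zero_or_eventually_ne_zero with h0 | h1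
    · exfalso
      apply hc2
      have hconst : f =ᶠ[𝓝 c] (fun _ => f c) := by
        filter_upwards [h0] with z hz
        exact sub_eq_zero.mp hz
      have : deriv f =ᶠ[𝓝 c] (fun _ => (0 : ℂ)) := by
        have := hconst.deriv
        simpa using this
      rw [this.deriv_eq]; simp
    · simpa [sub_eq_zero] using h1
  have hzne : ∀ᶠ z in 𝓝[≠] c, z ≠ c := eventually_mem_nhdsWithin
  -- continuity facts
  have hgc : Tendsto g (𝓝[≠] c) (𝓝 (g c)) :=
    hg.continuousAt.continuousWithinAt.tendsto
  have hfc : Tendsto f (𝓝[≠] c) (𝓝 (f c)) :=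
    hf.continuousAt.continuousWithinAt.tendsto
  have hdc : Tendsto (deriv f) (𝓝[≠] c) (𝓝 0) := by
    have := hf'.continuousAt.continuousWithinAt.tendsto (s := {c}ᶜ)
    rwa [hc1] at this
  -- Step 1 : g (f c) = 0
  have hgfc : g (f c) = 0 := by
    have hT : Tendsto (fun z => (g z - (g z - g (f z) / deriv f z)) * deriv f z)
        (𝓝[≠] c) (𝓝 ((g c - 0) * 0)) := ((hgc.sub h).mul hdc)
    have heq : (fun z => (g z - (g z - g (f z) / deriv f z)) * deriv f z)
        =ᶠ[𝓝[≠] c] (fun z => g (f z)) := by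
      filter_upwards [hne_d] with z hz
      field_simp
      ring
    have hT2 : Tendsto (fun z => g (f z)) (𝓝[≠] c) (𝓝 0) := by
      simpa using hT.congr' heq
    have hT3 : Tendsto (fun z => g (f z)) (𝓝[≠] c) (𝓝 (g (f c))) :=
      (hgf.continuousAt.tendsto).comp hfc
    exact tendsto_nhds_unique hT3 hT2
  -- Step 2 : g c = 0
  -- slope limits
  have hfd : HasDerivAt f 0 c := by
    have := hf.differentiableAt.hasDerivAt
    rwa [hc1] at this
  have hB : Tendsto (slope f c) (𝓝[≠] c) (𝓝 0) :=
    hasDerivAt_iff_tendsto_slope.mp hfd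
  have hC' : Tendsto (slope (deriv f) c) (𝓝[≠] c) (𝓝 (deriv (deriv f) c)) :=
    hasDerivAt_iff_tendsto_slope.mp hf'.differentiableAt.hasDerivAt
  have hC : Tendsto (fun z => (slope (deriv f) c z)⁻¹) (𝓝[≠] c)
      (𝓝 (deriv (deriv f) c)⁻¹) := hC'.inv₀ hc2
  have hftend : Tendsto f (𝓝[≠] c) (𝓝[≠] (f c)) := by
    rw [tendsto_nhdsWithin_iff]
    exact ⟨hfc, hne_f⟩
  have hA : Tendsto (fun z => slope g (f c) (f z)) (𝓝[≠] c) (𝓝 (deriv g (f c))) :=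
    (hasDerivAt_iff_tendsto_slope.mp hgf.differentiableAt.hasDerivAt).comp hftend
  have hP : Tendsto (fun z => slope g (f c) (f z) * slope f c z * (slope (deriv f) c z)⁻¹)
      (𝓝[≠] c) (𝓝 (deriv g (f c) * 0 * (deriv (deriv f) c)⁻¹)) :=
    (hA.mul hB).mul hC
  have hPeq : (fun z => slope g (f c) (f z) * slope f c z * (slope (deriv f) c z)⁻¹)
      =ᶠ[𝓝[≠] c] (fun z => g (f z) / deriv f z) := by
    filter_upwards [hne_d, hne_f, hzne] with z hd hfz hz
    rw [slope_def_field, slope_def_field, slope_def_field, hgfc, hc1]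
    have hzc : z - c ≠ 0 := sub_ne_zero.mpr hz
    have hfzc : f z - f c ≠ 0 := sub_ne_zero.mpr hfz
    field_simp
    ring
  have hP2 : Tendsto (fun z => g (f z) / deriv f z) (𝓝[≠] c) (𝓝 0) := by
    simpa using hP.congr' hPeq
  have hT : Tendsto (fun z => g z - g (f z) / deriv f z) (𝓝[≠] c) (𝓝 (g c - 0)) :=
    hgc.sub hP2
  have := tendsto_nhds_unique hT h
  simp only [sub_zero] at this
  exact ⟨this, hgfc⟩

/-- Uniqueness of guiding vector fields: let `f` be holomorphic with two
distinct simple critical points `c⁺, c⁻` whose critical values are distinct and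
not critical, and set `Z = {c⁺, c⁻, f(c⁺), f(c⁻)}`. If `ξ₁, ξ₂` are vector
fields holomorphic near `Z` such that `ϑ + ξᵢ − f*ξᵢ` is holomorphic and
vanishes at `c⁺` and `c⁻` (for a fixed `ϑ` with at worst simple poles at
`c⁺, c⁻`), then `ξ₁ = ξ₂` on `Z`. Here `f*ξ` has coefficient `ξ(f z)/f'(z)`. -/
theorem guiding_vector_field_unique
    (f : ℂ → ℂ) (cp cm : ℂ) (hcc : cp ≠ cm)
    (hfan : ∀ z ∈ ({cp, cm, f cp, f cm} : Set ℂ), AnalyticAt ℂ f z)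
    (hcrit_p : deriv f cp = 0) (hcrit_m : deriv f cm = 0)
    (hsimple_p : deriv (deriv f) cp ≠ 0) (hsimple_m : deriv (deriv f) cm ≠ 0)
    (hval : f cp ≠ f cm)
    (hval_p : deriv f (f cp) ≠ 0) (hval_m : deriv f (f cm) ≠ 0)
    (hvaldisj : ∀ c ∈ ({cp, cm} : Set ℂ), f cp ≠ c ∧ f cm ≠ c)
    (ϑ : ℂ → ℂ)
    (hϑ : ∀ c ∈ ({cp, cm} : Set ℂ), MeromorphicAt ϑ c ∧
      AnalyticAt ℂ (fun z => (z - c) * ϑ z) c)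
    (ξ₁ ξ₂ : ℂ → ℂ)
    (hξ₁ : ∀ z ∈ ({cp, cm, f cp, f cm} : Set ℂ), AnalyticAt ℂ ξ₁ z)
    (hξ₂ : ∀ z ∈ ({cp, cm, f cp, f cm} : Set ℂ), AnalyticAt ℂ ξ₂ z)
    (h₁ : ∀ c ∈ ({cp, cm} : Set ℂ),
      Tendsto (fun z => ϑ z + ξ₁ z - ξ₁ (f z) / deriv f z) (𝓝[≠] c) (𝓝 0))
    (h₂ : ∀ c ∈ ({cp, cm} : Set ℂ),
      Tendsto (fun z => ϑ z + ξ₂ z - ξ₂ (f z) / deriv f z) (𝓝[≠] c) (𝓝 0)) :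
    ∀ z ∈ ({cp, cm, f cp, f cm} : Set ℂ), ξ₁ z = ξ₂ z := by
  set g : ℂ → ℂ := fun z => ξ₁ z - ξ₂ z with hg_def
  have key : ∀ c ∈ ({cp, cm} : Set ℂ), g c = 0 ∧ g (f c) = 0 := by
    intro c hc
    have hc' : c = cp ∨ c = cm := by simpa using hc
    have hcZ : c ∈ ({cp, cm, f cp, f cm} : Set ℂ) := by
      rcases hc' with h | h <;> simp [h]
    have hfcZ : f c ∈ ({cp, cm, f cp, f cm} : Set ℂ) := by
      rcases hc' with h | h <;> subst h <;> simp
    have hgc : AnalyticAt ℂ g c := (hξ₁ c hcZ).sub (hξ₂ c hcZ)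
    have hgfc : AnalyticAt ℂ g (f c) := (hξ₁ _ hfcZ).sub (hξ₂ _ hfcZ)
    have hT : Tendsto (fun z => g z - g (f z) / deriv f z) (𝓝[≠] c) (𝓝 0) := by
      have := (h₁ c hc).sub (h₂ c hc)
      simp only [sub_zero] at this
      convert this using 2 with z
      simp only [hg_def]
      ring
    have hc1 : deriv f c = 0 := by rcases hc' with rfl | rfl; exacts [hcrit_p, hcrit_m]
    have hc2 : deriv (deriv f) c ≠ 0 := by
      rcases hc' with rfl | rfl; exacts [hsimple_p, hsimple_m]
    exact guiding_key (hfan c hcZ) hgc hgfc hc1 hc2 hT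
  have hp := key cp (by simp)
  have hm := key cm (by simp)
  intro z hz
  have : g z = 0 := by
    have hz' : z = cp ∨ z = cm ∨ z = f cp ∨ z = f cm := by simpa using hz
    rcases hz' with rfl | rfl | rfl | rfl
    · exact hp.1
    · exact hm.1
    · exact hp.2
    · exact hm.2
  simpa [hg_def, sub_eq_zero] using this
end
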